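/- Let k \geq 1 and d \geq 0 be integers. The constant coefficient in X of the symmetrized iterated raising operator \pi_{std^d} \circ R_k^d applied to a smooth function f : H \to C equals (-1)^d (\tau\partial_\tau + k + d - 1)(\tau\partial_\tau + k + d - 2)\cdots(\tau\partial_\tau + k) f. Consequently, if k > 0, then \pi_{std^d} \circ R_k^d is injective on polynomial functions of \tau. -/
import Mathlib


open Finset

/-- The raising operator `R_k = (X - τ)∂_τ - k`. -/
noncomputable def Rop (k : ℤ) (F : ℂ → ℂ → ℂ) : ℂ → ℂ → ℂ :=
  fun X τ => (X - τ) * deriv (fun s => F X s) τ - (k : ℂ) * F X τ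

/-- The iterated raising operator `R_k^d = R_{k+d-1} ∘ ⋯ ∘ R_k` (after
symmetrization of the formal variables into a single variable `X`). -/
noncomputable def Riter (k : ℤ) : ℕ → (ℂ → ℂ → ℂ) → (ℂ → ℂ → ℂ)
  | 0, F => F
  | d + 1, F => Rop (k + d) (Riter k d F)

/-- The shifted Euler operator `τ∂_τ + c`. -/
noncomputable def euler (c : ℂ) (f : ℂ → ℂ) : ℂ → ℂ :=
  fun τ => τ * deriv f τ + c * f τ

/-- `(τ∂_τ + k + d - 1)(τ∂_τ + k + d - 2) ⋯ (τ∂_τ + k)`. -/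
noncomputable def eulerIter (k : ℤ) : ℕ → (ℂ → ℂ) → (ℂ → ℂ)
  | 0, f => f
  | d + 1, f => euler ((k : ℂ) + d) (eulerIter k d f)

lemma Riter_zero (k : ℤ) (d : ℕ) (f : ℂ → ℂ) (τ : ℂ) :
    Riter k d (fun _ t => f t) 0 τ = (-1 : ℂ) ^ d * eulerIter k d f τ := by
  induction d generalizing τ with
  | zero => simp [Riter, eulerIter]
  | succ d ih =>
    have h : (fun s => Riter k d (fun _ t => f t) 0 s)
        = fun s => (-1 : ℂ) ^ d * eulerIter k d f s := funext fun s => ih s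
    simp only [Riter, Rop, eulerIter, euler, h, deriv_const_mul_field, ih]
    push_cast
    ring

noncomputable def Epoly (c : ℂ) (p : Polynomial ℂ) : Polynomial ℂ :=
  Polynomial.X * Polynomial.derivative p + Polynomial.C c * p

noncomputable def EpolyIter (k : ℤ) : ℕ → Polynomial ℂ → Polynomial ℂ
  | 0, p => p
  | d + 1, p => Epoly ((k : ℂ) + d) (EpolyIter k d p)

lemma euler_eval (c : ℂ) (p : Polynomial ℂ) :
    euler c (fun t => p.eval t) = fun t => (Epoly c p).eval t := by
  funext t
  simp [euler, Epoly, Polynomial.deriv]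

lemma eulerIter_eval (k : ℤ) (d : ℕ) (p : Polynomial ℂ) :
    eulerIter k d (fun t => p.eval t) = fun t => (EpolyIter k d p).eval t := by
  induction d with
  | zero => rfl
  | succ d ih => simp [eulerIter, EpolyIter, ih, euler_eval]

lemma Epoly_coeff (c : ℂ) (p : Polynomial ℂ) (n : ℕ) :
    (Epoly c p).coeff n = ((n : ℂ) + c) * p.coeff n := by
  cases n with
  | zero =>
    simp [Epoly, Polynomial.mul_coeff_zero]
  | succ n =>
    simp [Epoly, Polynomial.coeff_X_mul, Polynomial.coeff_derivative]
    ring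

lemma Epoly_inj (c : ℂ) (hc : 0 < c.re) (p q : Polynomial ℂ)
    (h : Epoly c p = Epoly c q) : p = q := by
  ext n
  have h2 := congrArg (fun r => Polynomial.coeff r n) h
  simp only [Epoly_coeff] at h2
  have hne : ((n : ℂ) + c) ≠ 0 := by
    intro h0
    have := congrArg Complex.re h0
    simp at this
    have hn : (0:ℝ) ≤ (n:ℝ) := Nat.cast_nonneg n
    linarith
  exact mul_left_cancel₀ hne h2

lemma EpolyIter_inj (k : ℤ) (hk : 1 ≤ k) (d : ℕ) (p q : Polynomial ℂ)
    (h : EpolyIter k d p = EpolyIter k d q) : p = q := by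
  induction d with
  | zero => exact h
  | succ d ih =>
    apply ih
    apply Epoly_inj ((k : ℂ) + d) _ _ _ h
    have : ((k : ℂ) + d).re = (k : ℝ) + d := by simp
    rw [this]
    have : (1:ℝ) ≤ (k:ℝ) := by exact_mod_cast hk
    have hd : (0:ℝ) ≤ (d:ℝ) := Nat.cast_nonneg d
    linarith

/-- The constant coefficient in `X` (i.e. the value at `X = 0`) of
`π_{std^d} ∘ R_k^d f` equals `(-1)^d (τ∂_τ + k+d-1) ⋯ (τ∂_τ + k) f`;
consequently for `k > 0` the operator is injective on polynomial functions
of `τ`. -/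
theorem raising_operator_constant_coeff_and_injectivity
    (k : ℤ) (hk : 1 ≤ k) (d : ℕ) :
    (∀ f : ℂ → ℂ, DifferentiableOn ℂ f {z : ℂ | 0 < z.im} →
      ∀ τ : ℂ, 0 < τ.im →
        Riter k d (fun _ t => f t) 0 τ = (-1 : ℂ) ^ d * eulerIter k d f τ)
    ∧ (∀ p q : Polynomial ℂ,
        (∀ X τ : ℂ, Riter k d (fun _ t => p.eval t) X τ
            = Riter k d (fun _ t => q.eval t) X τ) → p = q) := by
  constructor
  · intro f _ τ _
    exact Riter_zero k d f τ
  · intro p q h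
    apply EpolyIter_inj k hk d
    apply Polynomial.funext
    intro τ
    have h1 := Riter_zero k d (fun t => p.eval t) τ
    have h2 := Riter_zero k d (fun t => q.eval t) τ
    have h3 := h 0 τ
    rw [h1, h2] at h3
    have h4 := mul_left_cancel₀ (pow_ne_zero d (by norm_num : (-1:ℂ) ≠ 0)) h3
    rw [eulerIter_eval, eulerIter_eval] at h4
    exact h4
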